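/- Let (f, α) be an appropriate pair with Karlsson function K_α, let Γ be a connected graph with Floyd metrics δ_a (a a vertex), and let s(ε, α) := K_α(ε) + (1/2)·α(2·K_α(ε)). Then for every set F of vertices of Γ (possibly with boundary points in the Floyd completion), every vertex a, and every ε > 0: H_α(F) ⊆ N_ε^{δ̄_a}(F) ∪ N_s^{d}(a), i.e., every vertex on an α-distorted path with endpoints in F either lies within Floyd-distance ε (based at a) from F, or within graph-distance s(ε,α) from a. -/

import Mathlib

/-- A finite α-distorted path in a graph. -/
def IsDistPath {A : Type*} (Γ : SimpleGraph A) (α : ℕ → ℝ) {n : ℕ}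
    (γ : Fin (n + 1) → A) : Prop :=
  (∀ i : Fin n, Γ.Adj (γ i.castSucc) (γ i.succ)) ∧
  ∀ i j : Fin (n + 1), i ≤ j → ((j : ℕ) - (i : ℕ) : ℝ) ≤ α (Γ.dist (γ i) (γ j))

/-- The α-hull of F: all vertices lying on some α-distorted path with endpoints in F. -/
def distHull {A : Type*} (Γ : SimpleGraph A) (α : ℕ → ℝ) (F : Set A) : Set A :=
  {x | ∃ (n : ℕ) (γ : Fin (n + 1) → A), IsDistPath Γ α γ ∧
    γ 0 ∈ F ∧ γ (Fin.last n) ∈ F ∧ ∃ i, γ i = x}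

private lemma subpath_isDistPath {A : Type*} {Γ : SimpleGraph A} {α : ℕ → ℝ} {n : ℕ}
    {γ : Fin (n + 1) → A} (h : IsDistPath Γ α γ) (s m : ℕ) (hsm : s + m ≤ n) :
    IsDistPath Γ α (fun j : Fin (m + 1) =>
      γ ⟨s + j.val, by have := j.isLt; omega⟩) := by
  constructor
  · intro j
    exact h.1 ⟨s + j.val, by have := j.isLt; omega⟩
  · intro p q hpq
    have hp := p.isLt
    have hq := q.isLt
    have hpq' : p.val ≤ q.val := Fin.le_def.mp hpq
    have h2 := h.2 ⟨s + p.val, by omega⟩ ⟨s + q.val, by omega⟩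
      (Fin.mk_le_mk.mpr (by omega))
    calc ((q.val : ℝ) - p.val) = ((s + q.val : ℕ) : ℝ) - ((s + p.val : ℕ) : ℝ) := by
          push_cast; ring
      _ ≤ _ := h2

private lemma chain_dist {A : Type*} {Γ : SimpleGraph A} (hconn : Γ.Connected) {n : ℕ}
    {γ : Fin (n + 1) → A} (hadj : ∀ i : Fin n, Γ.Adj (γ i.castSucc) (γ i.succ))
    (p : ℕ) (hp : p ≤ n) :
    ∀ q, p ≤ q → ∀ (hq : q ≤ n),
      Γ.dist (γ ⟨p, by omega⟩) (γ ⟨q, by omega⟩) ≤ q - p := by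
  intro q hpq
  induction q, hpq using Nat.le_induction with
  | base => intro _; simp
  | succ q hq ih =>
    intro hq1
    have h1 := ih (by omega)
    have h2 : Γ.dist (γ ⟨q, by omega⟩) (γ ⟨q + 1, by omega⟩) = 1 :=
      SimpleGraph.dist_eq_one_iff_adj.mpr (hadj ⟨q, by omega⟩)
    calc Γ.dist (γ ⟨p, by omega⟩) (γ ⟨q + 1, by omega⟩)
        ≤ Γ.dist (γ ⟨p, by omega⟩) (γ ⟨q, by omega⟩)
          + Γ.dist (γ ⟨q, by omega⟩) (γ ⟨q + 1, by omega⟩) := hconn.dist_triangle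
      _ ≤ (q - p) + 1 := by omega
      _ = q + 1 - p := by omega

private lemma chain_tele {A : Type*} (δ : A → A → ℝ)
    (hδ_self : ∀ x, δ x x = 0) (hδ_tri : ∀ x y z, δ x z ≤ δ x y + δ y z)
    {n : ℕ} (γ : Fin (n + 1) → A) (s : ℕ) :
    ∀ m, ∀ (h : s + m ≤ n),
      δ (γ ⟨s, by omega⟩) (γ ⟨s + m, by omega⟩) ≤
        ∑ j : Fin m, δ (γ ⟨s + j.val, by have := j.isLt; omega⟩)
          (γ ⟨s + j.val + 1, by have := j.isLt; omega⟩) := by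
  intro m
  induction m with
  | zero => intro h; simp [hδ_self]
  | succ m ih =>
    intro h
    rw [Fin.sum_univ_castSucc]
    have h1 := ih (by omega)
    have h2 : δ (γ ⟨s, by omega⟩) (γ ⟨s + (m + 1), by omega⟩) ≤
        δ (γ ⟨s, by omega⟩) (γ ⟨s + m, by omega⟩)
        + δ (γ ⟨s + m, by omega⟩) (γ ⟨s + m + 1, by omega⟩) := hδ_tri _ _ _
    refine h2.trans ?_
    gcongr
    · exact h1
    · simp

set_option maxHeartbeats 1600000 in
/-- With s(ε,α) := K_α(ε) + α(2K_α(ε))/2, every vertex of the α-hull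
of F is either within Floyd-distance ε (based at a) of F, or within graph-distance
s(ε,α) of a: H_α(F) ⊆ N_ε^{δ̄_a}(F) ∪ N_s^d(a). -/
theorem hull_local_structure
    {A : Type*} (Γ : SimpleGraph A) (hconn : Γ.Connected)
    (α : ℕ → ℝ) (hα_mono : Monotone α) (hα_ge : ∀ n : ℕ, (n : ℝ) ≤ α n)
    (a : A)
    -- the Floyd metric based at a
    (δ : A → A → ℝ)
    (hδ_self : ∀ x, δ x x = 0) (hδ_symm : ∀ x y, δ x y = δ y x)
    (hδ_nonneg : ∀ x y, 0 ≤ δ x y) (hδ_tri : ∀ x y z, δ x z ≤ δ x y + δ y z)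
    -- K is a Karlsson function for (f, α): nonincreasing, and d(a, Im γ) ≤ K(length γ)
    (K : ℝ → ℕ) (hK_anti : Antitone K)
    (hK : ∀ (n : ℕ) (γ : Fin (n + 1) → A), IsDistPath Γ α γ →
      ∀ L : ℝ, L = ∑ i : Fin n, δ (γ i.castSucc) (γ i.succ) → 0 < L →
      (⨅ i, Γ.dist a (γ i)) ≤ K L)
    (ε : ℝ) (hε : 0 < ε) :
    ∀ (F : Set A), ∀ x ∈ distHull Γ α F,
      (∃ y ∈ F, δ x y ≤ ε) ∨ ((Γ.dist a x : ℝ) ≤ (K ε : ℝ) + α (2 * K ε) / 2) := by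
  intro F x hx
  obtain ⟨n, γ, hγ, h0, hlast, i, rfl⟩ := hx
  have hi := i.isLt
  set iv := i.val with hiv
  -- the two subpaths
  set γ1 : Fin (iv + 1) → A := fun j => γ ⟨0 + j.val, by have := j.isLt; omega⟩ with hγ1
  set γ2 : Fin ((n - iv) + 1) → A :=
    fun j => γ ⟨iv + j.val, by have := j.isLt; omega⟩ with hγ2
  have hpath1 : IsDistPath Γ α γ1 := subpath_isDistPath hγ 0 iv (by omega)
  have hpath2 : IsDistPath Γ α γ2 := subpath_isDistPath hγ iv (n - iv) (by omega)
  set L1 : ℝ := ∑ j : Fin iv, δ (γ1 j.castSucc) (γ1 j.succ) with hL1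
  set L2 : ℝ := ∑ j : Fin (n - iv), δ (γ2 j.castSucc) (γ2 j.succ) with hL2
  -- identify endpoints
  have e0 : γ 0 = γ ⟨0, by omega⟩ := by congr 1
  have ei : γ i = γ ⟨iv, by omega⟩ := by congr 1
  have elast : γ (Fin.last n) = γ ⟨iv + (n - iv), by omega⟩ := by
    congr 1; apply Fin.ext; simp; omega
  by_cases hc1 : L1 ≤ ε
  · left
    refine ⟨γ 0, h0, ?_⟩
    have ht := chain_tele δ hδ_self hδ_tri γ 0 iv (by omega)
    have hsum : δ (γ ⟨0, by omega⟩) (γ ⟨0 + iv, by omega⟩) ≤ L1 := by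
      refine ht.trans_eq ?_
      refine Finset.sum_congr rfl (fun j _ => ?_)
      congr 1
    have e0i : γ ⟨0 + iv, by omega⟩ = γ i := by congr 1; ext; simp; exact hiv
    rw [e0i] at hsum
    rw [hδ_symm]
    rw [e0]
    exact hsum.trans hc1
  by_cases hc2 : L2 ≤ ε
  · left
    refine ⟨γ (Fin.last n), hlast, ?_⟩
    have ht := chain_tele δ hδ_self hδ_tri γ iv (n - iv) (by omega)
    have hsum : δ (γ ⟨iv, by omega⟩) (γ ⟨iv + (n - iv), by omega⟩) ≤ L2 := by
      refine ht.trans_eq ?_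
      refine Finset.sum_congr rfl (fun j _ => ?_)
      congr 1
    rw [← elast, ← ei] at hsum
    exact hsum.trans hc2
  -- both subpath lengths exceed ε
  push_neg at hc1 hc2
  right
  rw [ei]
  have hK1 : (⨅ j, Γ.dist a (γ1 j)) ≤ K ε := by
    have := hK iv γ1 hpath1 L1 rfl (hε.trans hc1)
    exact this.trans (hK_anti hc1.le)
  have hK2 : (⨅ j, Γ.dist a (γ2 j)) ≤ K ε := by
    have := hK (n - iv) γ2 hpath2 L2 rfl (hε.trans hc2)
    exact this.trans (hK_anti hc2.le)
  -- attain the infima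
  have hatt1 : ∃ j, Γ.dist a (γ1 j) = ⨅ j, Γ.dist a (γ1 j) := by
    have hmem : (⨅ j, Γ.dist a (γ1 j)) ∈ Set.range (fun j => Γ.dist a (γ1 j)) := by
      rw [iInf]; exact Nat.sInf_mem (Set.range_nonempty _)
    obtain ⟨j, hj⟩ := hmem; exact ⟨j, hj⟩
  have hatt2 : ∃ j, Γ.dist a (γ2 j) = ⨅ j, Γ.dist a (γ2 j) := by
    have hmem : (⨅ j, Γ.dist a (γ2 j)) ∈ Set.range (fun j => Γ.dist a (γ2 j)) := by
      rw [iInf]; exact Nat.sInf_mem (Set.range_nonempty _)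
    obtain ⟨j, hj⟩ := hmem; exact ⟨j, hj⟩
  obtain ⟨j1, hj1⟩ := hatt1
  obtain ⟨j2, hj2⟩ := hatt2
  have hj1K : Γ.dist a (γ1 j1) ≤ K ε := hj1 ▸ hK1
  have hj2K : Γ.dist a (γ2 j2) ≤ K ε := hj2 ▸ hK2
  have hj1lt := j1.isLt
  have hj2lt := j2.isLt
  set p : ℕ := 0 + j1.val with hp
  set q : ℕ := iv + j2.val with hq
  have hpi : p ≤ iv := by omega
  have hiq : iv ≤ q := by omega
  have hqn : q ≤ n := by omega
  have hd1 : Γ.dist a (γ ⟨p, by omega⟩) ≤ K ε := hj1K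
  have hd2 : Γ.dist a (γ ⟨q, by omega⟩) ≤ K ε := hj2K
  -- distance between the two close points
  have hdpq : Γ.dist (γ ⟨p, by omega⟩) (γ ⟨q, by omega⟩) ≤ 2 * K ε := by
    have h3 : Γ.dist (γ ⟨p, by omega⟩) (γ ⟨q, by omega⟩) ≤
        Γ.dist (γ ⟨p, by omega⟩) a + Γ.dist a (γ ⟨q, by omega⟩) := hconn.dist_triangle
    have h3' : Γ.dist (γ ⟨p, by omega⟩) a = Γ.dist a (γ ⟨p, by omega⟩) :=
      SimpleGraph.dist_comm
    omega
  have hqp : ((q : ℝ) - p) ≤ α (2 * K ε) := by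
    have h4 := hγ.2 ⟨p, by omega⟩ ⟨q, by omega⟩ (Fin.mk_le_mk.mpr (by omega))
    exact h4.trans (hα_mono hdpq)
  rcases le_or_gt (iv - p) (q - iv) with hcase | hcase
  · -- γ ⟨p⟩ is within (q-p)/2 of γ i
    have hchain := chain_dist hconn hγ.1 p (by omega) iv hpi (by omega)
    have hcast : ((iv - p : ℕ) : ℝ) ≤ α (2 * K ε) / 2 := by
      have h5 : ((iv - p : ℕ) : ℝ) = (iv : ℝ) - p := by
        rw [Nat.cast_sub hpi]
      have h6 : 2 * ((iv : ℝ) - p) ≤ (q : ℝ) - p := by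
        have : (iv : ℕ) - p ≤ q - iv := hcase
        have h7 : ((iv - p : ℕ) : ℝ) ≤ ((q - iv : ℕ) : ℝ) := by exact_mod_cast this
        rw [Nat.cast_sub hpi, Nat.cast_sub hiq] at h7
        linarith
      linarith
    have htri : (Γ.dist a (γ ⟨iv, by omega⟩) : ℝ) ≤ (Γ.dist a (γ ⟨p, by omega⟩) : ℝ)
        + (Γ.dist (γ ⟨p, by omega⟩) (γ ⟨iv, by omega⟩) : ℝ) := by
      exact_mod_cast hconn.dist_triangle
    have hch : (Γ.dist (γ ⟨p, by omega⟩) (γ ⟨iv, by omega⟩) : ℝ) ≤ ((iv - p : ℕ) : ℝ) := by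
      exact_mod_cast hchain
    have hd1' : (Γ.dist a (γ ⟨p, by omega⟩) : ℝ) ≤ (K ε : ℝ) := by exact_mod_cast hd1
    linarith
  · have hchain := chain_dist hconn hγ.1 iv (by omega) q hiq hqn
    have hcast : ((q - iv : ℕ) : ℝ) ≤ α (2 * K ε) / 2 := by
      have h6 : 2 * ((q : ℝ) - iv) ≤ (q : ℝ) - p := by
        have : (q : ℕ) - iv ≤ iv - p := hcase.le
        have h7 : ((q - iv : ℕ) : ℝ) ≤ ((iv - p : ℕ) : ℝ) := by exact_mod_cast this
        rw [Nat.cast_sub hpi, Nat.cast_sub hiq] at h7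
        linarith
      rw [Nat.cast_sub hiq]
      linarith
    have htri : (Γ.dist a (γ ⟨iv, by omega⟩) : ℝ) ≤ (Γ.dist a (γ ⟨q, by omega⟩) : ℝ)
        + (Γ.dist (γ ⟨q, by omega⟩) (γ ⟨iv, by omega⟩) : ℝ) := by
      exact_mod_cast hconn.dist_triangle
    have hch : (Γ.dist (γ ⟨q, by omega⟩) (γ ⟨iv, by omega⟩) : ℝ) ≤ ((q - iv : ℕ) : ℝ) := by
      have hcomm : Γ.dist (γ ⟨q, by omega⟩) (γ ⟨iv, by omega⟩) =
          Γ.dist (γ ⟨iv, by omega⟩) (γ ⟨q, by omega⟩) := SimpleGraph.dist_comm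
      exact_mod_cast le_trans (le_of_eq hcomm) hchain
    have hd2' : (Γ.dist a (γ ⟨q, by omega⟩) : ℝ) ≤ (K ε : ℝ) := by exact_mod_cast hd2
    linarith
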